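/- arXiv:1907.05135 — 3 statements merged into one kernel-verified Lean document; each statement's English description precedes it below -/
import Mathlib

section
/- Consider the 4-vertex graph on vertices {a,b,c,d} with edges (a,b), (a,c), (b,c), (c,d). The maximum matching has size 2. If a uniformly random permutation of the vertices is chosen as a decision order, and each unmatched vertex in turn greedily matches its favorite unmatched neighbor under the common preference order c > b > a > d, then the expected size of the resulting matching is 5/4. Hence the ratio of expected matching size to maximum matching size is 5/8. -/
/-- Adjacency of the 4-vertex graph `a=0, b=1, c=2, d=3` with edges
`(a,b), (a,c), (b,c), (c,d)`. -/
def adj4 (u v : Fin 4) : Bool :=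
  ([((0:Fin 4),(1:Fin 4)), (0,2), (1,2), (2,3)].contains (u, v)) ||
  ([((0:Fin 4),(1:Fin 4)), (0,2), (1,2), (2,3)].contains (v, u))

/-- The common preference order `c > b > a > d`. -/
def pref4 : List (Fin 4) := [2, 1, 0, 3]

/-- Whether `u` is covered by the partial matching `M`. -/
def matchedIn (M : List (Fin 4 × Fin 4)) (u : Fin 4) : Bool :=
  M.any fun e => e.1 = u || e.2 = u

/-- One run of the greedy algorithm: vertices act in the given order; an unmatched
vertex matches its most preferred unmatched neighbor, if any. -/
def rdoRun : List (Fin 4) → List (Fin 4 × Fin 4) → List (Fin 4 × Fin 4)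
  | [], M => M
  | u :: rest, M =>
    if matchedIn M u then rdoRun rest M
    else
      match pref4.find? (fun v => adj4 u v && !matchedIn M v) with
      | some v => rdoRun rest ((u, v) :: M)
      | none => rdoRun rest M

/-- The matching produced by RDO with decision order `order`. -/
def rdo (order : List (Fin 4)) : List (Fin 4 × Fin 4) := rdoRun order []

/-- The 4-vertex graph as a simple graph. -/
def G4 : SimpleGraph (Fin 4) where
  Adj u v := adj4 u v
  symm := ⟨by intro u v h; revert h; revert u v; decide⟩
  loopless := ⟨by intro u h; revert h; revert u; decide⟩


lemma sum_nat30 : ((([0,1,2,3] : List (Fin 4)).permutations'.map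
    (fun l => (rdo l).length)).sum : ℕ) = 30 := by decide

lemma sum_eq : ((([0, 1, 2, 3] : List (Fin 4)).permutations.map
        (fun l => ((rdo l).length : ℚ))).sum = 30) := by
  have hp : ([0,1,2,3] : List (Fin 4)).permutations.Perm ([0,1,2,3] : List (Fin 4)).permutations' :=
    List.permutations_perm_permutations' _
  rw [(hp.map _).sum_eq]
  have h : (fun l : List (Fin 4) => ((rdo l).length : ℚ)) =
      (fun n : ℕ => (n : ℚ)) ∘ (fun l => (rdo l).length) := rfl
  rw [h, ← List.map_map, ← Nat.cast_list_sum, sum_nat30]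
  norm_num

def P4 : SimpleGraph.Subgraph G4 where
  verts := Set.univ
  Adj u v := (u = 0 ∧ v = 1) ∨ (u = 1 ∧ v = 0) ∨ (u = 2 ∧ v = 3) ∨ (u = 3 ∧ v = 2)
  adj_sub := by rintro u v (⟨rfl,rfl⟩|⟨rfl,rfl⟩|⟨rfl,rfl⟩|⟨rfl,rfl⟩) <;> simp only [G4] <;> decide
  edge_vert := by intro u v _; trivial
  symm := ⟨by intro u v h; revert h; revert u v; decide⟩

lemma P4_matching : P4.IsMatching := by
  intro v _
  fin_cases v
  · exact ⟨1, Or.inl ⟨rfl, rfl⟩, by rintro y (⟨h,rfl⟩|⟨h,rfl⟩|⟨h,rfl⟩|⟨h,rfl⟩) <;> first | rfl | exact absurd h (by decide)⟩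
  · exact ⟨0, Or.inr (Or.inl ⟨rfl, rfl⟩), by rintro y (⟨h,rfl⟩|⟨h,rfl⟩|⟨h,rfl⟩|⟨h,rfl⟩) <;> first | rfl | exact absurd h (by decide)⟩
  · exact ⟨3, Or.inr (Or.inr (Or.inl ⟨rfl, rfl⟩)), by rintro y (⟨h,rfl⟩|⟨h,rfl⟩|⟨h,rfl⟩|⟨h,rfl⟩) <;> first | rfl | exact absurd h (by decide)⟩
  · exact ⟨2, Or.inr (Or.inr (Or.inr ⟨rfl, rfl⟩)), by rintro y (⟨h,rfl⟩|⟨h,rfl⟩|⟨h,rfl⟩|⟨h,rfl⟩) <;> first | rfl | exact absurd h (by decide)⟩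

/-- The graph has a perfect matching (hence maximum matching size `2`),
the expected size of the RDO matching over a uniformly random decision order is `5/4`,
and hence the ratio of expected matching size to maximum matching size is `5/8`. -/
theorem stmt1 :
    (∃ P : SimpleGraph.Subgraph G4, P.IsMatching ∧ P.verts = Set.univ) ∧
    ((([0, 1, 2, 3] : List (Fin 4)).permutations.map
        (fun l => ((rdo l).length : ℚ))).sum / 24 = 5 / 4) ∧
    ((([0, 1, 2, 3] : List (Fin 4)).permutations.map
        (fun l => ((rdo l).length : ℚ))).sum / 24) / 2 = 5 / 8 := by
  refine ⟨⟨P4, P4_matching, rfl⟩, ?_, ?_⟩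
  · rw [sum_eq]; norm_num
  · rw [sum_eq]; norm_num
end

section
/- With g, h as in the explicit construction, for all θ, λ ∈ [0,1], the quantity (1−θ)(1−λ)(1−g(min{θ,λ})+h(min{θ,λ})) + (1−θ)∫₀^λ g(y) dy + (1−λ)∫₀^θ (g(y)−h(y)) dy + ∫₀^{min{θ,λ}} (θ+λ−2y) g(y) dy is at least 0.5014. -/
/-- The explicit piecewise linear function `g` from the paper. -/
noncomputable def g (y : ℝ) : ℝ :=
  if y ≤ 0.13 then 0.365 * y + 0.48926
  else if y < 0.4 then 0.067 * y + 0.528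
  else 0.5548

/-- `h = (1 - g)/10`. -/
noncomputable def h (y : ℝ) : ℝ := (1 - g y) / 10

/-- `m = min {g - h, 1 - g}`. -/
noncomputable def m (y : ℝ) : ℝ := min (g y - h y) (1 - g y)

set_option maxHeartbeats 1000000

open MeasureTheory intervalIntegral

lemma gval1 (y : ℝ) (h1 : y ≤ 0.13) : g y = 0.365 * y + 0.48926 := if_pos h1

lemma gval2 (y : ℝ) (h1 : (0.13:ℝ) ≤ y) (h2 : y ≤ 0.4) : g y = 0.067 * y + 0.528 := by
  unfold g
  split_ifs with ha hb
  · have : y = 0.13 := le_antisymm ha h1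
    subst this; norm_num
  · rfl
  · have : y = 0.4 := le_antisymm h2 (not_lt.mp hb)
    subst this; norm_num

lemma gval3 (y : ℝ) (h1 : (0.4:ℝ) ≤ y) : g y = 0.5548 := by
  unfold g
  split_ifs with ha hb
  · linarith
  · linarith
  · rfl

lemma g_eq' : g = fun y => if y ≤ 0.13 then 0.365 * y + 0.48926
    else if y ≤ 0.4 then 0.067 * y + 0.528 else 0.5548 := by
  funext y
  by_cases h1 : y ≤ 0.13
  · rw [gval1 y h1, if_pos h1]
  · rw [if_neg h1]
    by_cases h2 : y ≤ 0.4
    · rw [gval2 y (le_of_not_ge h1) h2, if_pos h2]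
    · rw [gval3 y (le_of_not_ge h2), if_neg h2]

lemma g_cont : Continuous g := by
  rw [g_eq']
  apply Continuous.if_le
  · exact (continuous_const.mul continuous_id).add continuous_const
  · apply Continuous.if_le
    · exact (continuous_const.mul continuous_id).add continuous_const
    · exact continuous_const
    · exact continuous_id
    · exact continuous_const
    · intro y hy; subst hy; norm_num
  · exact continuous_id
  · exact continuous_const
  · intro y hy; subst hy; norm_num

lemma gI (u v : ℝ) : IntervalIntegrable g volume u v := g_cont.intervalIntegrable u v
lemma ygI (u v : ℝ) : IntervalIntegrable (fun y => y * g y) volume u v :=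
  (continuous_id.mul g_cont).intervalIntegrable u v

lemma intlin (a b c d : ℝ) : ∫ y in a..b, (c * y + d) = c * (b^2 - a^2) / 2 + d * (b - a) := by
  rw [integral_add ((intervalIntegrable_id).const_mul c) intervalIntegrable_const,
    intervalIntegral.integral_const_mul, integral_id, intervalIntegral.integral_const]
  simp [smul_eq_mul]; ring

lemma intylin (a b c d : ℝ) : ∫ y in a..b, y * (c * y + d)
    = c * (b^3 - a^3) / 3 + d * (b^2 - a^2) / 2 := by
  have e : ∀ y : ℝ, y * (c * y + d) = c * y^2 + d * y := fun y => by ring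
  simp_rw [e]
  rw [integral_add (((continuous_pow 2).intervalIntegrable a b).const_mul c)
    ((intervalIntegrable_id).const_mul d), intervalIntegral.integral_const_mul, intervalIntegral.integral_const_mul,
    integral_pow, integral_id]
  push_cast; ring

lemma G1 (x : ℝ) (h0 : 0 ≤ x) (h1 : x ≤ 0.13) :
    ∫ y in (0:ℝ)..x, g y = 0.1825 * x^2 + 0.48926 * x := by
  rw [integral_congr (g := fun y => 0.365 * y + 0.48926) ?_, intlin]
  · ring
  · intro y hy
    rw [Set.uIcc_of_le h0] at hy
    exact gval1 y (hy.2.trans h1)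

lemma G2 (x : ℝ) (h1 : (0.13:ℝ) ≤ x) (h2 : x ≤ 0.4) :
    ∫ y in (0:ℝ)..x, g y = 0.0335 * x^2 + 0.528 * x - 0.0025181 := by
  rw [← integral_add_adjacent_intervals (gI 0 0.13) (gI 0.13 x),
    G1 0.13 (by norm_num) le_rfl,
    integral_congr (g := fun y => 0.067 * y + 0.528) ?_, intlin]
  · ring
  · intro y hy
    rw [Set.uIcc_of_le h1] at hy
    exact gval2 y hy.1 (hy.2.trans h2)

lemma G3 (x : ℝ) (h1 : (0.4:ℝ) ≤ x) :
    ∫ y in (0:ℝ)..x, g y = 0.5548 * x - 0.0078781 := by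
  rw [← integral_add_adjacent_intervals (gI 0 0.4) (gI 0.4 x),
    G2 0.4 (by norm_num) le_rfl,
    integral_congr (g := fun _ => (0.5548:ℝ)) ?_, intervalIntegral.integral_const]
  · simp [smul_eq_mul]; ring
  · intro y hy
    rw [Set.uIcc_of_le h1] at hy
    exact gval3 y hy.1

lemma K1 (x : ℝ) (h0 : 0 ≤ x) (h1 : x ≤ 0.13) :
    ∫ y in (0:ℝ)..x, y * g y = (0.365 * x^3 + 0.73389 * x^2) / 3 := by
  rw [integral_congr (g := fun y => y * (0.365 * y + 0.48926)) ?_, intylin]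
  · ring
  · intro y hy
    rw [Set.uIcc_of_le h0] at hy
    simp only [gval1 y (hy.2.trans h1)]

lemma K2 (x : ℝ) (h1 : (0.13:ℝ) ≤ x) (h2 : x ≤ 0.4) :
    ∫ y in (0:ℝ)..x, y * g y = (0.067 * x^3 + 0.792 * x^2 - 0.000327353) / 3 := by
  rw [← integral_add_adjacent_intervals (ygI 0 0.13) (ygI 0.13 x),
    K1 0.13 (by norm_num) le_rfl,
    integral_congr (g := fun y => y * (0.067 * y + 0.528)) ?_, intylin]
  · ring
  · intro y hy
    rw [Set.uIcc_of_le h1] at hy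
    simp only [gval2 y hy.1 (hy.2.trans h2)]

lemma K3 (x : ℝ) (h1 : (0.4:ℝ) ≤ x) :
    ∫ y in (0:ℝ)..x, y * g y = (0.8322 * x^2 - 0.002471353) / 3 := by
  rw [← integral_add_adjacent_intervals (ygI 0 0.4) (ygI 0.4 x),
    K2 0.4 (by norm_num) le_rfl,
    integral_congr (g := fun y => y * 0.5548) ?_]
  · rw [show (fun y : ℝ => y * 0.5548) = fun y : ℝ => y * (0 * y + 0.5548) by funext y; ring, intylin]
    ring
  · intro y hy
    rw [Set.uIcc_of_le h1] at hy
    simp only [gval3 y hy.1]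


/-- For all `θ, λ ∈ [0,1]`, the lower bound of Equation (8) is at
least `0.5014`. -/
theorem stmt8 (θ lam : ℝ) (hθ : θ ∈ Set.Icc (0:ℝ) 1) (hlam : lam ∈ Set.Icc (0:ℝ) 1) :
    (0.5014:ℝ) ≤
      (1 - θ) * (1 - lam) * (1 - g (min θ lam) + h (min θ lam))
      + (1 - θ) * (∫ y in (0:ℝ)..lam, g y)
      + (1 - lam) * (∫ y in (0:ℝ)..θ, (g y - h y))
      + ∫ y in (0:ℝ)..(min θ lam), (θ + lam - 2 * y) * g y := by
  obtain ⟨ht0, ht1⟩ := hθ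
  obtain ⟨hl0, hl1⟩ := hlam
  have hsub : (∫ y in (0:ℝ)..θ, (g y - h y))
      = 11/10 * (∫ y in (0:ℝ)..θ, g y) - θ/10 := by
    have e : ∀ y : ℝ, g y - h y = 11/10 * g y - 1/10 := fun y => by unfold h; ring
    simp_rw [e]
    rw [integral_sub ((gI 0 θ).const_mul _) intervalIntegrable_const,
      intervalIntegral.integral_const_mul, intervalIntegral.integral_const]
    simp [smul_eq_mul]; ring
  have hmin : ∀ u : ℝ, (∫ y in (0:ℝ)..u, (θ + lam - 2*y) * g y)
      = (θ + lam) * (∫ y in (0:ℝ)..u, g y) - 2 * ∫ y in (0:ℝ)..u, y * g y := by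
    intro u
    have e : ∀ y : ℝ, (θ + lam - 2*y) * g y = (θ+lam) * g y - 2 * (y * g y) :=
      fun y => by ring
    simp_rw [e]
    rw [integral_sub ((gI 0 u).const_mul _) ((ygI 0 u).const_mul _),
      intervalIntegral.integral_const_mul, intervalIntegral.integral_const_mul]
  rw [hsub]
  unfold h
  rcases le_total θ lam with hc | hc
  · rw [min_eq_left hc, hmin θ]
    rcases le_or_gt θ 0.13 with h1 | h1
    · rw [G1 θ ht0 h1, K1 θ ht0 h1, gval1 θ h1]
      rcases le_or_gt lam 0.13 with h2 | h2
      · rw [G1 lam hl0 h2]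
        nlinarith [ht0, hl0, hc, h1, h2, sq_nonneg (θ-lam), mul_nonneg (sub_nonneg.2 h1) (sub_nonneg.2 h2), mul_nonneg (sub_nonneg.2 hc) (sub_nonneg.2 h2), mul_nonneg (sub_nonneg.2 hc) (sub_nonneg.2 h1)]
      · rcases le_or_gt lam 0.4 with h3 | h3
        · rw [G2 lam h2.le h3]
          nlinarith [ht0, hl0, hc, h1, h3, sq_nonneg (θ-lam), mul_nonneg (sub_nonneg.2 h1) (sub_nonneg.2 h3), mul_nonneg (sub_nonneg.2 hc) (sub_nonneg.2 h3), mul_nonneg (sub_nonneg.2 hc) (sub_nonneg.2 h1)]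
        · rw [G3 lam h3.le]
          nlinarith [ht0, hl0, hc, h1, hl1, sq_nonneg (θ-lam), mul_nonneg (sub_nonneg.2 h1) (sub_nonneg.2 hl1), mul_nonneg (sub_nonneg.2 hc) (sub_nonneg.2 hl1), mul_nonneg (sub_nonneg.2 hc) (sub_nonneg.2 h1)]
    · rcases le_or_gt θ 0.4 with h2 | h2
      · rw [G2 θ h1.le h2, K2 θ h1.le h2, gval2 θ h1.le h2]
        rcases le_or_gt lam 0.4 with h3 | h3
        · rw [G2 lam (by linarith) h3]
          have hb1 : (0.13:ℝ) ≤ θ := h1.le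
          have hb2 : (0.13:ℝ) ≤ lam := by linarith
          nlinarith [sq_nonneg (θ - 0.2425), sq_nonneg (lam - 0.2425), sq_nonneg (θ - lam), mul_nonneg (sub_nonneg.2 h2) (sq_nonneg (lam - 0.2425)), mul_nonneg (sub_nonneg.2 h2) (sq_nonneg (θ - 0.2425)), mul_nonneg (sub_nonneg.2 hc) (sub_nonneg.2 h3), mul_nonneg (sub_nonneg.2 h2) (sub_nonneg.2 h3), hb1, hb2, h2, h3, hc, mul_nonneg (sub_nonneg.2 hb1) (sq_nonneg (lam - 0.2425)), mul_nonneg (sub_nonneg.2 hb1) (sq_nonneg (θ - 0.2425))]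
        · rw [G3 lam h3.le]
          nlinarith [ht0, hl0, hc, h2, hl1, sq_nonneg (θ-lam), mul_nonneg (sub_nonneg.2 h2) (sub_nonneg.2 hl1), mul_nonneg (sub_nonneg.2 hc) (sub_nonneg.2 hl1), mul_nonneg (sub_nonneg.2 hc) (sub_nonneg.2 h2)]
      · rw [G3 θ h2.le, K3 θ h2.le, gval3 θ h2.le, G3 lam (by linarith)]
        nlinarith [ht0, hl0, hc, ht1, hl1, sq_nonneg (θ-lam), mul_nonneg (sub_nonneg.2 ht1) (sub_nonneg.2 hl1), mul_nonneg (sub_nonneg.2 hc) (sub_nonneg.2 hl1), mul_nonneg (sub_nonneg.2 hc) (sub_nonneg.2 ht1)]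
  · rw [min_eq_right hc, hmin lam]
    rcases le_or_gt lam 0.13 with h1 | h1
    · rw [G1 lam hl0 h1, K1 lam hl0 h1, gval1 lam h1]
      rcases le_or_gt θ 0.13 with h2 | h2
      · rw [G1 θ ht0 h2]
        nlinarith [ht0, hl0, hc, h2, h1, sq_nonneg (θ-lam), mul_nonneg (sub_nonneg.2 h2) (sub_nonneg.2 h1), mul_nonneg (sub_nonneg.2 hc) (sub_nonneg.2 h1), mul_nonneg (sub_nonneg.2 hc) (sub_nonneg.2 h2)]
      · rcases le_or_gt θ 0.4 with h3 | h3
        · rw [G2 θ h2.le h3]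
          nlinarith [ht0, hl0, hc, h3, h1, sq_nonneg (θ-lam), mul_nonneg (sub_nonneg.2 h3) (sub_nonneg.2 h1), mul_nonneg (sub_nonneg.2 hc) (sub_nonneg.2 h1), mul_nonneg (sub_nonneg.2 hc) (sub_nonneg.2 h3)]
        · rw [G3 θ h3.le]
          have hA : (0:ℝ) ≤ 0.17831467 - 73/1200 * lam := by linarith
          have hP1 : (0:ℝ) ≤ (21409/100000000:ℝ) - (1235409/100000000:ℝ)*lam + (73/400:ℝ)*lam^2 - (73/1200:ℝ)*lam^3 := by
            nlinarith [mul_nonneg hA (sq_nonneg (lam - 0.0344)), hl0, h1]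
          have hP04 : (0:ℝ) ≤ (3113449/100000000:ℝ) - (28417449/100000000:ℝ)*lam + (2117/5000:ℝ)*lam^2 - (73/1200:ℝ)*lam^3 := by
            nlinarith [mul_nonneg hl0 (sub_nonneg.2 h1), sq_nonneg lam, mul_nonneg (sub_nonneg.2 h1) (sq_nonneg lam), hl0, h1]
          nlinarith [mul_nonneg (sub_nonneg.2 ht1) hP04, mul_nonneg (sub_nonneg.2 h3.le) hP1]
    · rcases le_or_gt lam 0.4 with h2 | h2
      · rw [G2 lam h1.le h2, K2 lam h1.le h2, gval2 lam h1.le h2]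
        rcases le_or_gt θ 0.4 with h3 | h3
        · rw [G2 θ (by linarith) h3]
          have hb1 : (0.13:ℝ) ≤ lam := h1.le
          have hb2 : (0.13:ℝ) ≤ θ := by linarith
          nlinarith [sq_nonneg (θ - 0.3168), sq_nonneg (lam - 0.2043), sq_nonneg (θ - lam - 0.1125), mul_nonneg (sub_nonneg.2 h2) (sq_nonneg (lam - 0.2043)), mul_nonneg (sub_nonneg.2 h2) (sq_nonneg (θ - 0.3168)), mul_nonneg (sub_nonneg.2 hb1) (sq_nonneg (θ - 0.3168)), mul_nonneg (sub_nonneg.2 hb1) (sq_nonneg (lam - 0.2043)), hb2, hb1, h3, h2, hc, mul_nonneg (sub_nonneg.2 h3) (sub_nonneg.2 h2)]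
        · rw [G3 θ h3.le]
          have hb1 : (0.13:ℝ) ≤ lam := h1.le
          nlinarith [sq_nonneg (lam - 0.1728), mul_nonneg (sub_nonneg.2 ht1) (sq_nonneg (lam - 0.1728)), mul_nonneg (sub_nonneg.2 h3.le) (sq_nonneg (lam - 0.1728)), mul_nonneg (sub_nonneg.2 h2) (sub_nonneg.2 h2), h3, hb1, ht1, h2, hc, mul_nonneg (sub_nonneg.2 hb1) (sub_nonneg.2 h2), mul_nonneg (sub_nonneg.2 ht1) (mul_nonneg (sub_nonneg.2 hb1) (sub_nonneg.2 h2))]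
      · rw [G3 lam h2.le, K3 lam h2.le, gval3 lam h2.le, G3 θ (by linarith)]
        nlinarith [ht0, hl0, hc, ht1, hl1, sq_nonneg (θ-lam), mul_nonneg (sub_nonneg.2 ht1) (sub_nonneg.2 hl1), mul_nonneg (sub_nonneg.2 hc) (sub_nonneg.2 hl1), mul_nonneg (sub_nonneg.2 hc) (sub_nonneg.2 ht1)]
end

section
/- Let g be the explicit piecewise linear function and h = (1−g)/10. Let λ₀ be defined by g(λ₀) + g(1) = 12/11 (so λ₀ ≈ 0.12835, lying in (0, 0.13)). Then for λ ∈ [0, λ₀] and any θ ∈ [0,1] with θ ≥ λ, (1−λ)((g(λ)−h(λ)) + (g(θ)−h(θ)) − 1) ≤ 0; i.e., g(λ) + g(θ) ≤ 12/11 implies the derivative in θ of the bound in Equation (8) is non-positive on this range. -/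
lemma g_upper {y : ℝ} (hy : 0 ≤ y) : g y ≤ 0.5548 := by
  unfold g; split_ifs <;> nlinarith

/-- Let `λ₀ ∈ (0, 0.13)` satisfy `g(λ₀) + g(1) = 12/11`. Then for all
`λ ∈ [0, λ₀]` and `θ ∈ [0,1]` with `θ ≥ λ`,
`(1−λ)((g(λ)−h(λ)) + (g(θ)−h(θ)) − 1) ≤ 0`. -/
theorem stmt18 (lam₀ : ℝ) (hlam₀ : lam₀ ∈ Set.Ioo (0:ℝ) 0.13)
    (hdef : g lam₀ + g 1 = 12 / 11)
    (lam θ : ℝ) (hlam : lam ∈ Set.Icc (0:ℝ) lam₀) (hθ : θ ∈ Set.Icc (0:ℝ) 1)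
    (hle : lam ≤ θ) :
    (1 - lam) * ((g lam - h lam) + (g θ - h θ) - 1) ≤ 0 := by
  obtain ⟨h0, h1⟩ := hlam₀
  obtain ⟨hl0, hl1⟩ := hlam
  have hg1 : g 1 = 0.5548 := by norm_num [g]
  have hglam : g lam ≤ g lam₀ := by
    unfold g
    rw [if_pos (by linarith), if_pos (by linarith)]
    linarith
  have hgθ : g θ ≤ 0.5548 := g_upper hθ.1
  have hsum : g lam + g θ ≤ 12 / 11 := by
    rw [hg1] at hdef; linarith
  have hlam1 : 1 - lam ≥ 0 := by nlinarith
  unfold h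
  nlinarith [mul_nonneg hlam1 (by linarith : 12/11 - (g lam + g θ) ≥ 0)]
end
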